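/- The Klein quartic, the smooth projective plane curve x³y + y³z + z³x = 0 over ℂ (a non-hyperelliptic Riemann surface of genus 3), is isomorphic as a complex algebraic curve to (the smooth model of) the cyclic 7-gonal curve y⁷ = x²(x−1); equivalently, their function fields are isomorphic as field extensions of ℂ. -/

import Mathlib

/-!
We model an irreducible algebraic curve over `ℂ` by its function field: for an affine plane
model cut out by an irreducible polynomial `f ∈ ℂ[x,y]`, the function field is the fraction
field of `ℂ[x,y]/(f)`.  Two irreducible curves over `ℂ` are isomorphic as Riemann surfaces
iff their function fields are isomorphic as `ℂ`-algebras.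
-/

noncomputable section

/-- The function field of the affine plane curve `{f = 0}` (with `x = X 0`, `y = X 1`). -/
abbrev planeCurveFF (f : MvPolynomial (Fin 2) ℂ) :=
  FractionRing (MvPolynomial (Fin 2) ℂ ⧸ Ideal.span {f})

/-- The Klein quartic `x³y + y³z + z³x = 0` in the affine chart `z = 1`. -/
def kleinQuartic : MvPolynomial (Fin 2) ℂ :=
  (MvPolynomial.X 0) ^ 3 * MvPolynomial.X 1 + (MvPolynomial.X 1) ^ 3 + MvPolynomial.X 0

/-- The cyclic `7`-gonal curve `y⁷ = x²(x - 1)`, the affine chart `z = 1` of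
`y⁷ = x²(x - z)z⁴`. -/
def sevenGonalModel : MvPolynomial (Fin 2) ℂ :=
  (MvPolynomial.X 1) ^ 7 - (MvPolynomial.X 0) ^ 2 * (MvPolynomial.X 0 - 1)

open Polynomial


/-- If `a` generates a rational function field inside `Ω` (i.e. `ca : ℂ[X] →+* Ω` is an
injective evaluation) and `p` is monic irreducible in `ℂ[X][Y]` vanishing at `(a, b)`,
then the kernel of evaluation at `(a,b)` is exactly the multiples of `p`. -/
lemma ker_eval_eq {Ω : Type} [Field Ω]
    (ca : Polynomial ℂ →+* Ω) (hca : Function.Injective ca)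
    (b : Ω) (p : Polynomial (Polynomial ℂ)) (hm : p.Monic) (hirr : Irreducible p)
    (hp : eval₂ ca b p = 0)
    (r : Polynomial (Polynomial ℂ)) : eval₂ ca b r = 0 ↔ p ∣ r := by
  constructor
  · intro hr
    set Fa : Subfield Ω := Subfield.closure (Set.range ca) with hFa
    have hmem : ∀ x : Polynomial ℂ, ca x ∈ Fa := fun x => Subfield.subset_closure ⟨x, rfl⟩
    let ca' : Polynomial ℂ →+* Fa := ca.codRestrict Fa hmem
    letI : Algebra (Polynomial ℂ) Fa := ca'.toAlgebra
    have hca' : Function.Injective ca' := fun x y h => hca (congrArg Subtype.val h)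
    have hcomp : (algebraMap Fa Ω).comp (algebraMap (Polynomial ℂ) Fa) = ca := rfl
    have hclos : Subring.closure (Set.range ca) = ca.range := by
      rw [← RingHom.coe_range, Subring.closure_eq]
    haveI : IsFractionRing (Polynomial ℂ) Fa := by
      refine ⟨⟨(fun y => ?_), (fun z => ?_), (fun {x y} h => ?_)⟩⟩
      · rw [isUnit_iff_ne_zero]
        intro h0
        have : (y : Polynomial ℂ) = 0 := hca' (by rw [show ca' (0 : Polynomial ℂ) = 0 from map_zero ca']; exact h0)
        exact nonZeroDivisors.ne_zero y.2 this
      · obtain ⟨y, hy, w, hw, hyw⟩ := Subfield.mem_closure_iff.mp z.2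
        rw [hclos] at hy hw
        obtain ⟨ry, rfl⟩ := hy
        obtain ⟨rw', rfl⟩ := hw
        by_cases h0 : ca rw' = 0
        · refine ⟨⟨0, 1⟩, ?_⟩
          have : (z : Ω) = 0 := by rw [← hyw, h0, div_zero]
          ext
          simp [this]
        · refine ⟨⟨ry, ⟨rw', mem_nonZeroDivisors_of_ne_zero (fun hh => h0 (by rw [hh, map_zero]))⟩⟩, ?_⟩
          ext
          show (z : Ω) * ca rw' = ca ry
          rw [← hyw, div_mul_cancel₀ _ h0]
      · exact ⟨1, by simpa using hca' h⟩
    have hirrF : Irreducible (p.map (algebraMap (Polynomial ℂ) Fa)) :=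
      (hm.irreducible_iff_irreducible_map_fraction_map).mp hirr
    have hroot : aeval b (p.map (algebraMap (Polynomial ℂ) Fa)) = 0 := by
      rw [aeval_def, eval₂_map, hcomp, hp]
    have hminp : p.map (algebraMap (Polynomial ℂ) Fa) = minpoly Fa b :=
      minpoly.eq_of_irreducible_of_monic hirrF hroot (hm.map _)
    have hdvd : minpoly Fa b ∣ r.map (algebraMap (Polynomial ℂ) Fa) := by
      apply minpoly.dvd
      rw [aeval_def, eval₂_map, hcomp, hr]
    rw [← hminp] at hdvd
    exact (map_dvd_map (algebraMap (Polynomial ℂ) Fa) hca' hm).mp hdvd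
  · rintro ⟨s, rfl⟩
    rw [eval₂_mul, hp, zero_mul]

abbrev R2 := MvPolynomial (Fin 2) ℂ
abbrev PP := Polynomial (Polynomial ℂ)

def iota : MvPolynomial (Fin 1) ℂ ≃ₐ[ℂ] Polynomial ℂ :=
  (MvPolynomial.renameEquiv ℂ ((Equiv.equivPUnit (Fin 1)) : Fin 1 ≃ PUnit.{1})).trans (MvPolynomial.pUnitAlgEquiv ℂ)

/-- `X 0 ↦ X` (outer), `X 1 ↦ C X`. -/
def e₂ : R2 ≃ₐ[ℂ] PP :=
  (MvPolynomial.finSuccEquiv ℂ 1).trans (Polynomial.mapAlgEquiv iota)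

/-- `X 0 ↦ C X`, `X 1 ↦ X` (outer). -/
def e₁ : R2 ≃ₐ[ℂ] PP :=
  (MvPolynomial.renameEquiv ℂ (Equiv.swap 0 1)).trans e₂

lemma iota_X : iota (MvPolynomial.X 0) = Polynomial.X := by
  simp [iota, MvPolynomial.pUnitAlgEquiv]

lemma e₂_X0 : e₂ (MvPolynomial.X 0) = Polynomial.X := by
  simp [e₂, MvPolynomial.finSuccEquiv_X_zero]

lemma e₂_X1 : e₂ (MvPolynomial.X 1) = Polynomial.C Polynomial.X := by
  have h1 : (1 : Fin 2) = Fin.succ 0 := rfl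
  rw [e₂, AlgEquiv.trans_apply, h1, MvPolynomial.finSuccEquiv_X_succ]
  rw [show (Polynomial.mapAlgEquiv iota) (Polynomial.C (MvPolynomial.X 0)) =
    Polynomial.C (iota (MvPolynomial.X 0)) from Polynomial.map_C _, iota_X]

lemma e₁_X0 : e₁ (MvPolynomial.X 0) = Polynomial.C Polynomial.X := by
  simp [e₁, MvPolynomial.renameEquiv_apply, MvPolynomial.rename_X, Equiv.swap_apply_left, e₂_X1]

lemma e₁_X1 : e₁ (MvPolynomial.X 1) = Polynomial.X := by
  simp [e₁, MvPolynomial.renameEquiv_apply, MvPolynomial.rename_X, Equiv.swap_apply_right, e₂_X0]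
/-- Klein quartic as `y`-polynomial: `Y³ + (X³)Y + X`. -/
def pf : PP := Polynomial.X ^ 3 +
  (Polynomial.C (Polynomial.X ^ 3) * Polynomial.X + Polynomial.C Polynomial.X)

/-- 7-gonal curve as `y`-polynomial: `Y⁷ - (X³ - X²)`. -/
def pg : PP := Polynomial.X ^ 7 - Polynomial.C (Polynomial.X ^ 3 - Polynomial.X ^ 2)

/-- 7-gonal curve as `x`-polynomial: `X³ - (X² + Y⁷)`. -/
def pg2 : PP := Polynomial.X ^ 3 - (Polynomial.X ^ 2 + Polynomial.C (Polynomial.X ^ 7))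

lemma e₁_klein : e₁ kleinQuartic = pf := by
  simp only [kleinQuartic, map_add, map_mul, map_pow, e₁_X0, e₁_X1, pf]
  ring

lemma e₁_gonal : e₁ sevenGonalModel = pg := by
  simp only [sevenGonalModel, map_sub, map_add, map_mul, map_pow, map_one, e₁_X0, e₁_X1, pg]
  ring

lemma e₂_gonal : e₂ sevenGonalModel = -pg2 := by
  simp only [sevenGonalModel, map_sub, map_add, map_mul, map_pow, map_one, e₂_X0, e₂_X1, pg2]
  ring

lemma monic_pf : pf.Monic := by unfold pf; monicity!
lemma monic_pg : pg.Monic := by unfold pg; monicity!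
lemma monic_pg2 : pg2.Monic := by unfold pg2; monicity!
lemma deg_pf : pf.degree = 3 := by unfold pf; compute_degree!
lemma deg_pg : pg.degree = 7 := by unfold pg; compute_degree!
lemma coeff_pf_0 : pf.coeff 0 = Polynomial.X := by
  unfold pf
  simp only [Polynomial.coeff_add, Polynomial.coeff_X_pow, Polynomial.coeff_C_mul,
    Polynomial.coeff_X, Polynomial.coeff_C]
  norm_num
lemma coeff_pf_1 : pf.coeff 1 = Polynomial.X ^ 3 := by
  unfold pf
  simp only [Polynomial.coeff_add, Polynomial.coeff_X_pow, Polynomial.coeff_C_mul,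
    Polynomial.coeff_X, Polynomial.coeff_C]
  norm_num
lemma coeff_pf_2 : pf.coeff 2 = 0 := by
  unfold pf
  simp only [Polynomial.coeff_add, Polynomial.coeff_X_pow, Polynomial.coeff_C_mul,
    Polynomial.coeff_X, Polynomial.coeff_C]
  norm_num
lemma coeff_pg_0 : pg.coeff 0 = -(Polynomial.X ^ 3 - Polynomial.X ^ 2) := by
  unfold pg
  simp only [Polynomial.coeff_sub, Polynomial.coeff_X_pow, Polynomial.coeff_C]
  norm_num
lemma coeff_pg_n {n : ℕ} (h1 : 0 < n) (h2 : n < 7) : pg.coeff n = 0 := by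
  unfold pg
  simp only [Polynomial.coeff_sub, Polynomial.coeff_X_pow, Polynomial.coeff_C,
    Nat.ne_of_lt h2, Nat.pos_iff_ne_zero.mp h1]
  simp [Nat.pos_iff_ne_zero.mp h1]
lemma irr_pf : Irreducible pf := by
  apply Polynomial.irreducible_of_eisenstein_criterion
    (P := Ideal.span {(Polynomial.X : Polynomial ℂ)})
  · exact (Ideal.span_singleton_prime Polynomial.X_ne_zero).mpr Polynomial.prime_X
  · rw [monic_pf.leadingCoeff, Ideal.mem_span_singleton]
    intro h
    exact Polynomial.not_isUnit_X (isUnit_of_dvd_one h)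
  · intro n hn
    rw [deg_pf] at hn
    have hn' : n < 3 := by exact_mod_cast hn
    interval_cases n
    · rw [coeff_pf_0, Ideal.mem_span_singleton]
    · rw [coeff_pf_1, Ideal.mem_span_singleton]; exact dvd_pow_self _ (by norm_num)
    · rw [coeff_pf_2]; exact Ideal.zero_mem _
  · rw [deg_pf]; norm_num
  · rw [coeff_pf_0, Ideal.span_singleton_pow, Ideal.mem_span_singleton]
    intro h
    have := Polynomial.degree_le_of_dvd h Polynomial.X_ne_zero
    rw [Polynomial.degree_X_pow, Polynomial.degree_X] at this
    norm_num at this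
  · exact monic_pf.isPrimitive

lemma irr_pg : Irreducible pg := by
  apply Polynomial.irreducible_of_eisenstein_criterion
    (P := Ideal.span {(Polynomial.X - Polynomial.C 1 : Polynomial ℂ)})
  · exact (Ideal.span_singleton_prime (Polynomial.X_sub_C_ne_zero 1)).mpr
      (Polynomial.prime_X_sub_C 1)
  · rw [monic_pg.leadingCoeff, Ideal.mem_span_singleton]
    intro h
    have := Polynomial.degree_le_of_dvd h one_ne_zero
    rw [Polynomial.degree_X_sub_C, Polynomial.degree_one] at this
    norm_num at this
  · intro n hn
    rw [deg_pg] at hn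
    have hn' : n < 7 := by exact_mod_cast hn
    rcases Nat.eq_zero_or_pos n with h0 | h0
    · subst h0
      rw [coeff_pg_0, Ideal.mem_span_singleton]
      exact ⟨-Polynomial.X ^ 2, by rw [Polynomial.C_1]; ring⟩
    · rw [coeff_pg_n h0 hn']; exact Ideal.zero_mem _
  · rw [deg_pg]; norm_num
  · rw [coeff_pg_0, Ideal.span_singleton_pow, Ideal.mem_span_singleton]
    intro h
    have heq : -(Polynomial.X ^ 3 - Polynomial.X ^ 2 : Polynomial ℂ)
        = (Polynomial.X - Polynomial.C 1) * (-Polynomial.X ^ 2) := by rw [Polynomial.C_1]; ring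
    rw [heq, pow_two] at h
    have h2 : (Polynomial.X - Polynomial.C 1 : Polynomial ℂ) ∣ -Polynomial.X ^ 2 :=
      (mul_dvd_mul_iff_left (Polynomial.X_sub_C_ne_zero 1)).mp h
    rw [Polynomial.dvd_iff_isRoot] at h2
    simp [Polynomial.IsRoot] at h2
  · exact monic_pg.isPrimitive

lemma irr_gonal : Irreducible sevenGonalModel := by
  have := e₁_gonal ▸ (MulEquiv.irreducible_iff (e₁ : R2 ≃ₐ[ℂ] PP).toMulEquiv).mpr
  exact Irreducible.of_map (f := e₁.toMulEquiv) (by rw [show e₁.toMulEquiv sevenGonalModel = pg from e₁_gonal]; exact irr_pg)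

lemma irr_pg2 : Irreducible pg2 := by
  have h2 : Irreducible (e₂ sevenGonalModel) := Irreducible.map e₂.toMulEquiv irr_gonal
  rw [e₂_gonal] at h2
  rcases h2 with ⟨hu, hf⟩
  constructor
  · intro h; exact hu (h.neg)
  · intro a b hab
    rcases hf (a := -a) (b := b) (by rw [hab]; ring) with h | h
    · exact Or.inl (by simpa using h.neg)
    · exact Or.inr h

lemma irr_klein : Irreducible kleinQuartic :=
  Irreducible.of_map (f := e₁.toMulEquiv)
    (by rw [show e₁.toMulEquiv kleinQuartic = pf from e₁_klein]; exact irr_pf)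
abbrev Om := AlgebraicClosure (FractionRing (Polynomial ℂ))

/-- the transcendental `t`. -/
def tt : Om := algebraMap (Polynomial ℂ) Om Polynomial.X

lemma algebraMap_Om_inj : Function.Injective (algebraMap (Polynomial ℂ) Om) := by
  rw [IsScalarTower.algebraMap_eq (Polynomial ℂ) (FractionRing (Polynomial ℂ)) Om]
  exact (algebraMap (FractionRing (Polynomial ℂ)) Om).injective.comp
    (IsFractionRing.injective (Polynomial ℂ) (FractionRing (Polynomial ℂ)))

lemma trans_tt : Transcendental ℂ tt :=
  (transcendental_algebraMap_iff algebraMap_Om_inj).mpr (Polynomial.transcendental_X ℂ)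

lemma tt_ne_zero : tt ≠ 0 := by
  intro h
  apply trans_tt
  exact ⟨Polynomial.X, Polynomial.X_ne_zero, by simp [h]⟩

/-- the cubic whose root is the `x`-coordinate `χ`. -/
def qc : Polynomial Om := Polynomial.X ^ 3 - (Polynomial.X ^ 2 + Polynomial.C (tt ^ 7))

lemma deg_qc : qc.degree = 3 := by unfold qc; compute_degree!

/-- the `x`-coordinate `χ` of the 7-gonal curve point. -/
lemma deg_qc_ne : qc.degree ≠ 0 := by rw [deg_qc]; norm_num

def cc : Om := (IsAlgClosed.exists_root qc deg_qc_ne).choose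

lemma cc_spec : cc ^ 3 - (cc ^ 2 + tt ^ 7) = 0 := by
  have h := (IsAlgClosed.exists_root qc deg_qc_ne).choose_spec
  rw [Polynomial.IsRoot] at h
  rw [show cc = (IsAlgClosed.exists_root qc deg_qc_ne).choose from rfl]
  simpa [qc] using h

lemma cc_ne_zero : cc ≠ 0 := by
  intro h
  have := cc_spec
  rw [h] at this
  have h7 : tt ^ 7 = 0 := by linear_combination -this
  exact tt_ne_zero (pow_eq_zero_iff (by norm_num) |>.mp h7)

/-- the Klein-quartic point: x-coordinate `ξ = 1/t`. -/
def xx : Om := tt⁻¹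

/-- the Klein-quartic point: y-coordinate `υ = -t²/χ`. -/
def yy : Om := -(tt ^ 2 / cc)

lemma trans_xx : Transcendental ℂ xx := by
  intro halg
  exact trans_tt (by simpa [xx] using halg.inv)

lemma xx_ne_zero : xx ≠ 0 := by
  simp [xx, tt_ne_zero]

lemma yy_ne_zero : yy ≠ 0 := by
  simp [yy, _root_.div_eq_zero_iff, tt_ne_zero, cc_ne_zero]

/-- coefficient embeddings -/
def caxx : Polynomial ℂ →+* Om := (Polynomial.aeval xx).toRingHom
def catt : Polynomial ℂ →+* Om := (Polynomial.aeval tt).toRingHom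

lemma caxx_inj : Function.Injective caxx := transcendental_iff_injective.mp trans_xx
lemma catt_inj : Function.Injective catt := transcendental_iff_injective.mp trans_tt

lemma root_pf : Polynomial.eval₂ caxx yy pf = 0 := by
  unfold pf
  simp only [Polynomial.eval₂_add, Polynomial.eval₂_mul, Polynomial.eval₂_X_pow,
    Polynomial.eval₂_X, Polynomial.eval₂_C]
  have h1 : caxx (Polynomial.X ^ 3) = xx ^ 3 := by simp [caxx]
  have h2 : caxx Polynomial.X = xx := by simp [caxx]
  rw [h1, h2]
  unfold xx yy
  have hc := cc_spec
  have ht := tt_ne_zero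
  have hcn := cc_ne_zero
  field_simp
  ring_nf
  ring_nf at hc
  linear_combination hc

lemma root_pg2 : Polynomial.eval₂ catt cc pg2 = 0 := by
  unfold pg2
  simp only [Polynomial.eval₂_sub, Polynomial.eval₂_add, Polynomial.eval₂_X_pow,
    Polynomial.eval₂_X, Polynomial.eval₂_C]
  have h1 : catt (Polynomial.X ^ 7) = tt ^ 7 := by simp [catt]
  rw [h1]
  exact cc_spec
def θf : R2 →+* Om := (MvPolynomial.aeval ![xx, yy]).toRingHom
def θg : R2 →+* Om := (MvPolynomial.aeval ![cc, tt]).toRingHom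

lemma θf_eq : θf = (Polynomial.eval₂RingHom caxx yy).comp e₁.toAlgHom.toRingHom := by
  apply MvPolynomial.ringHom_ext
  · intro c
    have hC : e₁ (MvPolynomial.C c) = Polynomial.C (Polynomial.C c) := by
      rw [← MvPolynomial.algebraMap_eq, AlgEquiv.commutes, Polynomial.algebraMap_apply,
        Polynomial.algebraMap_apply]
      rfl
    simp [θf, caxx, hC]
  · intro i
    fin_cases i
    · simp [θf, e₁_X0, caxx]
    · simp [θf, e₁_X1]

lemma θg_eq : θg = (Polynomial.eval₂RingHom catt cc).comp e₂.toAlgHom.toRingHom := by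
  apply MvPolynomial.ringHom_ext
  · intro c
    have hC : e₂ (MvPolynomial.C c) = Polynomial.C (Polynomial.C c) := by
      rw [← MvPolynomial.algebraMap_eq, AlgEquiv.commutes, Polynomial.algebraMap_apply,
        Polynomial.algebraMap_apply]
      rfl
    simp [θg, catt, hC]
  · intro i
    fin_cases i
    · simp [θg, e₂_X0]
    · simp [θg, e₂_X1, catt]

lemma θf_ker (r : R2) : θf r = 0 ↔ kleinQuartic ∣ r := by
  rw [θf_eq]
  show Polynomial.eval₂ caxx yy (e₁ r) = 0 ↔ _
  rw [ker_eval_eq caxx caxx_inj yy pf monic_pf irr_pf root_pf, ← e₁_klein]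
  constructor
  · intro h
    have := map_dvd e₁.symm h
    simpa using this
  · exact fun h => by obtain ⟨s, rfl⟩ := h; exact ⟨e₁ s, map_mul e₁ _ _⟩

lemma θg_ker (r : R2) : θg r = 0 ↔ sevenGonalModel ∣ r := by
  rw [θg_eq]
  show Polynomial.eval₂ catt cc (e₂ r) = 0 ↔ _
  rw [ker_eval_eq catt catt_inj cc pg2 monic_pg2 irr_pg2 root_pg2]
  have : pg2 ∣ e₂ r ↔ e₂ sevenGonalModel ∣ e₂ r := by rw [e₂_gonal]; exact (neg_dvd).symm
  rw [this]
  constructor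
  · intro h
    have := map_dvd e₂.symm h
    simpa using this
  · exact fun h => by obtain ⟨s, rfl⟩ := h; exact ⟨e₂ s, map_mul e₂ _ _⟩
def kleinIdeal : Ideal R2 := Ideal.span {kleinQuartic}
def gonalIdeal : Ideal R2 := Ideal.span {sevenGonalModel}

def lf : (R2 ⧸ kleinIdeal) →+* Om :=
  Ideal.Quotient.lift _ θf (fun a ha => (θf_ker a).mpr (Ideal.mem_span_singleton.mp ha))
def lg : (R2 ⧸ gonalIdeal) →+* Om :=
  Ideal.Quotient.lift _ θg (fun a ha => (θg_ker a).mpr (Ideal.mem_span_singleton.mp ha))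

lemma ker_θf : RingHom.ker θf = kleinIdeal := by
  ext r; rw [RingHom.mem_ker, θf_ker, kleinIdeal, Ideal.mem_span_singleton]
lemma ker_θg : RingHom.ker θg = gonalIdeal := by
  ext r; rw [RingHom.mem_ker, θg_ker, gonalIdeal, Ideal.mem_span_singleton]

lemma lf_inj : Function.Injective lf := by
  rw [lf]; exact (Ideal.injective_lift_iff _).mpr ker_θf
lemma lg_inj : Function.Injective lg := by
  rw [lg]; exact (Ideal.injective_lift_iff _).mpr ker_θg

lemma lf_mk (r : R2) : lf (Ideal.Quotient.mk _ r) = θf r := rfl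
lemma lg_mk (r : R2) : lg (Ideal.Quotient.mk _ r) = θg r := rfl

def T : Subfield Om := Subfield.closure (Set.range θf)
def Tg : Subfield Om := Subfield.closure (Set.range θg)

lemma θf_X0 : θf (MvPolynomial.X 0) = xx := by simp [θf]
lemma θf_X1 : θf (MvPolynomial.X 1) = yy := by simp [θf]
lemma θg_X0 : θg (MvPolynomial.X 0) = cc := by simp [θg]
lemma θg_X1 : θg (MvPolynomial.X 1) = tt := by simp [θg]
lemma θf_C (c : ℂ) : θf (MvPolynomial.C c) = algebraMap ℂ Om c := by simp [θf]
lemma θg_C (c : ℂ) : θg (MvPolynomial.C c) = algebraMap ℂ Om c := by simp [θg]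

lemma mem_T (r : R2) : θf r ∈ T := Subfield.subset_closure ⟨r, rfl⟩
lemma mem_Tg (r : R2) : θg r ∈ Tg := Subfield.subset_closure ⟨r, rfl⟩

lemma xx_mem_Tg : xx ∈ Tg := by
  have h : tt ∈ Tg := θg_X1 ▸ mem_Tg (MvPolynomial.X 1)
  simpa [xx] using Tg.inv_mem h

lemma yy_mem_Tg : yy ∈ Tg := by
  have h1 : tt ∈ Tg := θg_X1 ▸ mem_Tg (MvPolynomial.X 1)
  have h2 : cc ∈ Tg := θg_X0 ▸ mem_Tg (MvPolynomial.X 0)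
  rw [show yy = -(tt ^ 2 / cc) from rfl]
  exact Tg.neg_mem (Tg.div_mem (Tg.pow_mem h1 2) h2)

lemma tt_mem_T : tt ∈ T := by
  have h : xx ∈ T := θf_X0 ▸ mem_T (MvPolynomial.X 0)
  have := T.inv_mem h
  rwa [show xx = tt⁻¹ from rfl, inv_inv] at this

lemma cc_mem_T : cc ∈ T := by
  have h2 : yy ∈ T := θf_X1 ▸ mem_T (MvPolynomial.X 1)
  have hcc : cc = -(tt ^ 2 / yy) := by
    rw [show yy = -(tt ^ 2 / cc) from rfl]
    field_simp
    exact (mul_div_cancel_right₀ cc tt_ne_zero).symm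
  rw [hcc]
  exact T.neg_mem (T.div_mem (T.pow_mem tt_mem_T 2) h2)

lemma T_eq_Tg : T = Tg := by
  apply le_antisymm
  · rw [T, Subfield.closure_le]
    rintro _ ⟨r, rfl⟩
    induction r using MvPolynomial.induction_on with
    | C c => rw [θf_C, ← θg_C]; exact mem_Tg _
    | add p q hp hq => rw [map_add]; exact Tg.add_mem hp hq
    | mul_X p n hp =>
      rw [map_mul]
      refine Tg.mul_mem hp ?_
      fin_cases n
      · show θf (MvPolynomial.X 0) ∈ Tg
        rw [θf_X0]; exact xx_mem_Tg
      · show θf (MvPolynomial.X 1) ∈ Tg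
        rw [θf_X1]; exact yy_mem_Tg
  · rw [Tg, Subfield.closure_le]
    rintro _ ⟨r, rfl⟩
    induction r using MvPolynomial.induction_on with
    | C c => rw [θg_C, ← θf_C]; exact mem_T _
    | add p q hp hq => rw [map_add]; exact T.add_mem hp hq
    | mul_X p n hp =>
      rw [map_mul]
      refine T.mul_mem hp ?_
      fin_cases n
      · show θg (MvPolynomial.X 0) ∈ T
        rw [θg_X0]; exact cc_mem_T
      · show θg (MvPolynomial.X 1) ∈ T
        rw [θg_X1]; exact tt_mem_T

lemma lf_mem_T (a : R2 ⧸ kleinIdeal) : lf a ∈ T := by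
  obtain ⟨r, rfl⟩ := Ideal.Quotient.mk_surjective a
  rw [lf_mk]; exact mem_T r

lemma lg_mem_T (a : R2 ⧸ gonalIdeal) : lg a ∈ T := by
  obtain ⟨r, rfl⟩ := Ideal.Quotient.mk_surjective a
  rw [lg_mk, T_eq_Tg]; exact mem_Tg r

lemma range_θf : Subring.closure (Set.range θf) = θf.range := by
  rw [← RingHom.coe_range, Subring.closure_eq]
lemma range_θg : Subring.closure (Set.range θg) = θg.range := by
  rw [← RingHom.coe_range, Subring.closure_eq]

set_option maxHeartbeats 4000000 in
set_option synthInstance.maxHeartbeats 1000000 in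
theorem kleinQuartic_is_seven_gonal' :
    Nonempty (FractionRing (R2 ⧸ kleinIdeal) ≃ₐ[ℂ] FractionRing (R2 ⧸ gonalIdeal)) := by
  haveI domf : IsDomain (R2 ⧸ kleinIdeal) := Function.Injective.isDomain lf lf_inj
  haveI domg : IsDomain (R2 ⧸ gonalIdeal) := Function.Injective.isDomain lg lg_inj
  letI algf : Algebra (R2 ⧸ kleinIdeal) T := (lf.codRestrict T lf_mem_T).toAlgebra
  letI algg : Algebra (R2 ⧸ gonalIdeal) T := (lg.codRestrict T lg_mem_T).toAlgebra
  have algf_val : ∀ a, (algebraMap (R2 ⧸ kleinIdeal) T a : Om) = lf a := fun a => rfl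
  have algg_val : ∀ a, (algebraMap (R2 ⧸ gonalIdeal) T a : Om) = lg a := fun a => rfl
  haveI locf : IsLocalization (nonZeroDivisors (R2 ⧸ kleinIdeal)) T := by
    refine ⟨⟨(fun y => ?_), (fun z => ?_), (fun {x y} h => ?_)⟩⟩
    · rw [isUnit_iff_ne_zero]
      intro h0
      have h0' : lf (y : R2 ⧸ kleinIdeal) = 0 := by
        rw [← algf_val]; exact congrArg Subtype.val h0
      have : (y : R2 ⧸ kleinIdeal) = 0 := lf_inj (by rw [h0', map_zero])
      exact nonZeroDivisors.ne_zero y.2 this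
    · obtain ⟨y, hy, w, hw, hyw⟩ := Subfield.mem_closure_iff.mp z.2
      rw [range_θf] at hy hw
      obtain ⟨ry, rfl⟩ := hy
      obtain ⟨rw', rfl⟩ := hw
      by_cases h0 : θf rw' = 0
      · refine ⟨⟨0, 1⟩, ?_⟩
        have hz : (z : Om) = 0 := by rw [← hyw, h0, div_zero]
        ext
        simp [hz, algf_val]
      · have hs : Ideal.Quotient.mk kleinIdeal rw' ≠ 0 := by
          intro hh
          apply h0
          rw [← lf_mk, hh, map_zero]
        refine ⟨⟨Ideal.Quotient.mk kleinIdeal ry,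
          ⟨Ideal.Quotient.mk kleinIdeal rw', mem_nonZeroDivisors_of_ne_zero hs⟩⟩, ?_⟩
        ext
        show (z : Om) * (algebraMap (R2 ⧸ kleinIdeal) T (Ideal.Quotient.mk kleinIdeal rw') : Om)
          = (algebraMap (R2 ⧸ kleinIdeal) T (Ideal.Quotient.mk kleinIdeal ry) : Om)
        rw [algf_val, algf_val, lf_mk, lf_mk, ← hyw, div_mul_cancel₀ _ h0]
    · have : x = y := by
        apply lf_inj
        rw [← algf_val, ← algf_val, h]
      exact ⟨1, by rw [this]⟩
  haveI locg : IsLocalization (nonZeroDivisors (R2 ⧸ gonalIdeal)) T := by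
    refine ⟨⟨(fun y => ?_), (fun z => ?_), (fun {x y} h => ?_)⟩⟩
    · rw [isUnit_iff_ne_zero]
      intro h0
      have h0' : lg (y : R2 ⧸ gonalIdeal) = 0 := by
        rw [← algg_val]; exact congrArg Subtype.val h0
      have : (y : R2 ⧸ gonalIdeal) = 0 := lg_inj (by rw [h0', map_zero])
      exact nonZeroDivisors.ne_zero y.2 this
    · have hz2 : (z : Om) ∈ Tg := T_eq_Tg ▸ z.2
      obtain ⟨y, hy, w, hw, hyw⟩ := Subfield.mem_closure_iff.mp hz2
      rw [range_θg] at hy hw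
      obtain ⟨ry, rfl⟩ := hy
      obtain ⟨rw', rfl⟩ := hw
      by_cases h0 : θg rw' = 0
      · refine ⟨⟨0, 1⟩, ?_⟩
        have hz : (z : Om) = 0 := by rw [← hyw, h0, div_zero]
        ext
        simp [hz, algg_val]
      · have hs : Ideal.Quotient.mk gonalIdeal rw' ≠ 0 := by
          intro hh
          apply h0
          rw [← lg_mk, hh, map_zero]
        refine ⟨⟨Ideal.Quotient.mk gonalIdeal ry,
          ⟨Ideal.Quotient.mk gonalIdeal rw', mem_nonZeroDivisors_of_ne_zero hs⟩⟩, ?_⟩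
        ext
        show (z : Om) * (algebraMap (R2 ⧸ gonalIdeal) T (Ideal.Quotient.mk gonalIdeal rw') : Om)
          = (algebraMap (R2 ⧸ gonalIdeal) T (Ideal.Quotient.mk gonalIdeal ry) : Om)
        rw [algg_val, algg_val, lg_mk, lg_mk, ← hyw, div_mul_cancel₀ _ h0]
    · have : x = y := by
        apply lg_inj
        rw [← algg_val, ← algg_val, h]
      exact ⟨1, by rw [this]⟩
  let eqA : FractionRing (R2 ⧸ kleinIdeal) ≃ₐ[R2 ⧸ kleinIdeal] T :=
    IsLocalization.algEquiv (nonZeroDivisors (R2 ⧸ kleinIdeal)) _ _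
  let eqB : FractionRing (R2 ⧸ gonalIdeal) ≃ₐ[R2 ⧸ gonalIdeal] T :=
    IsLocalization.algEquiv (nonZeroDivisors (R2 ⧸ gonalIdeal)) _ _
  refine ⟨AlgEquiv.ofRingEquiv (f := eqA.toRingEquiv.trans eqB.toRingEquiv.symm) ?_⟩
  intro c
  rw [RingEquiv.trans_apply]
  have h1 : algebraMap ℂ (FractionRing (R2 ⧸ kleinIdeal)) c
      = algebraMap (R2 ⧸ kleinIdeal) (FractionRing (R2 ⧸ kleinIdeal)) (algebraMap ℂ _ c) :=
    IsScalarTower.algebraMap_apply ℂ _ _ c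
  have h2 : algebraMap ℂ (FractionRing (R2 ⧸ gonalIdeal)) c
      = algebraMap (R2 ⧸ gonalIdeal) (FractionRing (R2 ⧸ gonalIdeal)) (algebraMap ℂ _ c) :=
    IsScalarTower.algebraMap_apply ℂ _ _ c
  rw [h1, h2]
  have hA : eqA.toRingEquiv (algebraMap (R2 ⧸ kleinIdeal) _ (algebraMap ℂ _ c))
      = algebraMap (R2 ⧸ kleinIdeal) T (algebraMap ℂ _ c) := eqA.commutes _
  have hB : eqB.toRingEquiv (algebraMap (R2 ⧸ gonalIdeal) _ (algebraMap ℂ _ c))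
      = algebraMap (R2 ⧸ gonalIdeal) T (algebraMap ℂ _ c) := eqB.commutes _
  rw [hA]
  have hTeq : algebraMap (R2 ⧸ kleinIdeal) T (algebraMap ℂ _ c)
      = algebraMap (R2 ⧸ gonalIdeal) T (algebraMap ℂ _ c) := by
    ext
    rw [algf_val, algg_val]
    have e1 : algebraMap ℂ (R2 ⧸ kleinIdeal) c
        = Ideal.Quotient.mk kleinIdeal (MvPolynomial.C c) := by
      rw [IsScalarTower.algebraMap_apply ℂ R2 (R2 ⧸ kleinIdeal), Ideal.Quotient.algebraMap_eq,
        MvPolynomial.algebraMap_eq]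
    have e2 : algebraMap ℂ (R2 ⧸ gonalIdeal) c
        = Ideal.Quotient.mk gonalIdeal (MvPolynomial.C c) := by
      rw [IsScalarTower.algebraMap_apply ℂ R2 (R2 ⧸ gonalIdeal), Ideal.Quotient.algebraMap_eq,
        MvPolynomial.algebraMap_eq]
    rw [e1, e2, lf_mk, lg_mk, θf_C, θg_C]
  rw [hTeq, ← hB, RingEquiv.symm_apply_apply]

/-- **Klein's quartic as a cyclic 7-gonal curve.** The Klein quartic
`x³y + y³z + z³x = 0` (a non-hyperelliptic Riemann surface of genus `3`) is isomorphic, as a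
complex algebraic curve, to the smooth model of the cyclic `7`-gonal curve `y⁷ = x²(x-1)`:
their function fields are isomorphic as `ℂ`-algebras. -/
theorem kleinQuartic_is_seven_gonal :
    Nonempty (planeCurveFF kleinQuartic ≃ₐ[ℂ] planeCurveFF sevenGonalModel) :=
  kleinQuartic_is_seven_gonal'
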